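/- Let A = k⟨x,y⟩ with double Poisson bracket determined by {{x,y}} = 1⊗1, {{y,x}} = -1⊗1, {{x,x}} = {{y,y}} = 0. Then δ = xy - yx satisfies {{δ, a}} = a⊗1 - 1⊗a for all a ∈ A. -/
import Mathlib


/-!
STATEMENT 9: Let A = k⟨x,y⟩ with double bracket determined by {{x,y}} = 1⊗1,
{{y,x}} = -1⊗1, {{x,x}} = {{y,y}} = 0.  Then δ = xy - yx satisfies
{{δ,a}} = a⊗1 - 1⊗a for all a ∈ A.
-/

open TensorProduct

namespace Stmt9

theorem freeAlgebra_moment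
    (k : Type*) [Field k]
    (D : FreeAlgebra k (Fin 2) →ₗ[k] FreeAlgebra k (Fin 2) →ₗ[k]
        FreeAlgebra k (Fin 2) ⊗[k] FreeAlgebra k (Fin 2))
    -- derivation in the second argument for the outer bimodule structure
    (hder : ∀ a b c : FreeAlgebra k (Fin 2),
        D a (b * c) = D a b * (1 ⊗ₜ[k] c) + (b ⊗ₜ[k] 1) * D a c)
    -- antisymmetry {{a,b}} = -{{b,a}}°
    (hanti : ∀ a b : FreeAlgebra k (Fin 2),
        D a b = - (TensorProduct.comm k _ _) (D b a))
    -- values on the generators x = ι 0, y = ι 1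
    (hxy : D (FreeAlgebra.ι k (0 : Fin 2)) (FreeAlgebra.ι k (1 : Fin 2)) = 1 ⊗ₜ[k] 1)
    (hyx : D (FreeAlgebra.ι k (1 : Fin 2)) (FreeAlgebra.ι k (0 : Fin 2)) = -(1 ⊗ₜ[k] 1))
    (hxx : D (FreeAlgebra.ι k (0 : Fin 2)) (FreeAlgebra.ι k (0 : Fin 2)) = 0)
    (hyy : D (FreeAlgebra.ι k (1 : Fin 2)) (FreeAlgebra.ι k (1 : Fin 2)) = 0) :
    ∀ a : FreeAlgebra k (Fin 2),
      D (FreeAlgebra.ι k (0 : Fin 2) * FreeAlgebra.ι k (1 : Fin 2)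
          - FreeAlgebra.ι k (1 : Fin 2) * FreeAlgebra.ι k (0 : Fin 2)) a
        = a ⊗ₜ[k] 1 - 1 ⊗ₜ[k] a := by
  set x := FreeAlgebra.ι k (0 : Fin 2)
  set y := FreeAlgebra.ι k (1 : Fin 2)
  set δ := x * y - y * x with hδ
  -- helper lemmas, restated with the ambient (exotic) instances so that `rw` matches
  have hneg : ∀ u v : FreeAlgebra k (Fin 2) ⊗[k] FreeAlgebra k (Fin 2),
      (-u) * v = -(u * v) := fun u v => neg_mul u v
  have hnegr : ∀ u v : FreeAlgebra k (Fin 2) ⊗[k] FreeAlgebra k (Fin 2),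
      u * (-v) = -(u * v) := fun u v => mul_neg u v
  have hsubl : ∀ u v w : FreeAlgebra k (Fin 2) ⊗[k] FreeAlgebra k (Fin 2),
      (u - v) * w = u * w - v * w := fun u v w => sub_mul u v w
  have hsubr : ∀ u v w : FreeAlgebra k (Fin 2) ⊗[k] FreeAlgebra k (Fin 2),
      u * (v - w) = u * v - u * w := fun u v w => mul_sub u v w
  have htm : ∀ a b c d : FreeAlgebra k (Fin 2),
      (a ⊗ₜ[k] b) * (c ⊗ₜ[k] d) = (a * c) ⊗ₜ[k] (b * d) :=
    fun a b c d => Algebra.TensorProduct.tmul_mul_tmul a c b d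
  have hst : ∀ (r : k) (a b : FreeAlgebra k (Fin 2)),
      ((r • a) ⊗ₜ[k] b : FreeAlgebra k (Fin 2) ⊗[k] FreeAlgebra k (Fin 2))
        = a ⊗ₜ[k] (r • b) := fun r a b => TensorProduct.smul_tmul r a b
  have hst' : ∀ (r : k) (a b : FreeAlgebra k (Fin 2)),
      ((r • a) ⊗ₜ[k] b : FreeAlgebra k (Fin 2) ⊗[k] FreeAlgebra k (Fin 2))
        = r • (a ⊗ₜ[k] b) := fun r a b => TensorProduct.smul_tmul' r a b
  -- D x δ and D y δ
  have hxδ : D x δ = x ⊗ₜ[k] 1 - 1 ⊗ₜ[k] x := by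
    rw [hδ, map_sub, hder, hder, hxx, hxy, zero_mul, zero_add, mul_zero, add_zero,
      htm, htm, one_mul, one_mul, mul_one]
  have hyδ : D y δ = y ⊗ₜ[k] 1 - 1 ⊗ₜ[k] y := by
    rw [hδ, map_sub, hder, hder, hyy, hyx, zero_mul, zero_add, mul_zero, add_zero,
      hneg, hnegr, htm, htm, one_mul, one_mul, mul_one, sub_neg_eq_add, neg_add_eq_sub]
  have hδx : D δ x = x ⊗ₜ[k] 1 - 1 ⊗ₜ[k] x := by
    rw [hanti, hxδ]
    simp
  have hδy : D δ y = y ⊗ₜ[k] 1 - 1 ⊗ₜ[k] y := by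
    rw [hanti, hyδ]
    simp
  have one1 : ((1 : FreeAlgebra k (Fin 2)) ⊗ₜ[k] (1 : FreeAlgebra k (Fin 2)))
      = (1 : FreeAlgebra k (Fin 2) ⊗[k] FreeAlgebra k (Fin 2)) := rfl
  have hδ1 : D δ 1 = 0 := by
    have h := hder δ 1 1
    rw [mul_one, one1, mul_one, one_mul] at h
    exact left_eq_add.mp h
  intro a
  induction a using FreeAlgebra.induction with
  | grade0 r =>
      have h1 : (algebraMap k (FreeAlgebra k (Fin 2))) r = r • (1 : FreeAlgebra k (Fin 2)) := by
        rw [Algebra.algebraMap_eq_smul_one]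
      rw [h1, map_smul, hδ1, smul_zero, hst, sub_self]
  | grade1 i =>
      fin_cases i
      · exact hδx
      · exact hδy
  | mul a b ha hb =>
      rw [hder, ha, hb, hsubl, hsubr, htm, htm, htm]
      simp only [one_mul, mul_one]
      abel
  | add a b ha hb =>
      rw [map_add, ha, hb]
      have := TensorProduct.add_tmul (R := k) a b
        (1 : FreeAlgebra k (Fin 2))
      rw [TensorProduct.add_tmul, TensorProduct.tmul_add]
      abel

end Stmt9
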